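/- Let S be the antipode of the connected graded Hopf algebra (H(X,Ω), m, 1, Δ₀, ε). Then for every nonempty decorated planar rooted forest F ∈ ℱ(X,Ω), S(F) = Σ (−1)^k F_{I₁} ⋯ F_{I_k}, where the sum runs over all ordered tuples (I₁, …, I_k), k ≥ 1, of pairwise disjoint nonempty subsets of V(F) with I₁ ⊔ ⋯ ⊔ I_k = V(F). -/

import Mathlib

open scoped TensorProduct

universe u v w u'

/-- Decorated planar rooted trees: internal vertices are decorated by `Ω`,
leaves are decorated by `X ⊔ Ω` (a leaf decorated by `ω : Ω` is `node ω []`). -/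
inductive PTree (X : Type u) (Ω : Type v) : Type (max u v)
  | leafX : X → PTree X Ω
  | node : Ω → List (PTree X Ω) → PTree X Ω

namespace Moerdijk

variable {X : Type u} {Ω : Type v}

/-- `ℱ(X,Ω)`: decorated planar rooted forests, i.e. the free monoid on decorated
planar rooted trees under concatenation. -/
abbrev RForest (X : Type u) (Ω : Type v) := FreeMonoid (PTree X Ω)

/-- The single-vertex forest `•ₓ` for `x ∈ X`. -/
def leafF (x : X) : RForest X Ω := FreeMonoid.of (PTree.leafX x)

/-- Grafting of a forest onto a new common root decorated by `ω`. -/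
def graft (ω : Ω) (F : RForest X Ω) : RForest X Ω :=
  FreeMonoid.of (PTree.node ω (FreeMonoid.toList F))

variable (k : Type w) [CommRing k]

/-- `H(X,Ω)`: the free `k`-module on decorated planar rooted forests, a unital
associative algebra under the concatenation product. -/
abbrev RAlg (X : Type u) (Ω : Type v) := MonoidAlgebra k (RForest X Ω)

/-- The basis element of `H(X,Ω)` corresponding to a forest `F`. -/
noncomputable def ofF (F : RForest X Ω) : RAlg k X Ω := MonoidAlgebra.of k (RForest X Ω) F

/-- The grafting operator `B⁺_ω : H(X,Ω) → H(X,Ω)` as a linear map. -/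
noncomputable def Bplus (ω : Ω) : RAlg k X Ω →ₗ[k] RAlg k X Ω :=
  MonoidAlgebra.mapDomainLinearMap k k (graft ω)

/-- The value of the coproduct `Δ_λ` on a decorated planar rooted tree:
`Δ_λ(•ₓ) = •ₓ ⊗ 1 + 1 ⊗ •ₓ + λ •ₓ ⊗ •ₓ` and
`Δ_λ(B⁺_ω(F)) = (B⁺_ω ⊗ id)Δ_λ(F) + (id ⊗ B⁺_ω)Δ_λ(F)`. -/
noncomputable def DeltaT (lam : k) : PTree X Ω → (RAlg k X Ω ⊗[k] RAlg k X Ω)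
  | .leafX x =>
      ofF k (leafF x) ⊗ₜ[k] 1 + 1 ⊗ₜ[k] ofF k (leafF x)
        + lam • (ofF k (leafF x) ⊗ₜ[k] ofF k (leafF x))
  | .node ω ts =>
      ((TensorProduct.map (Bplus k ω) LinearMap.id
        + TensorProduct.map LinearMap.id (Bplus k ω) :
          (RAlg k X Ω ⊗[k] RAlg k X Ω) →ₗ[k] (RAlg k X Ω ⊗[k] RAlg k X Ω)))
        ((ts.attach.map fun t => DeltaT lam t.1).prod)
decreasing_by
  have := List.sizeOf_lt_of_mem t.2
  simp only [PTree.node.sizeOf_spec]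
  omega

/-- The value of the coproduct `Δ_λ` on a forest: `Δ_λ(T₁⋯Tₘ) = Δ_λ(T₁)⋯Δ_λ(Tₘ)`. -/
noncomputable def DeltaF (lam : k) (F : RForest X Ω) : RAlg k X Ω ⊗[k] RAlg k X Ω :=
  ((FreeMonoid.toList F).map (DeltaT k lam)).prod

/-- The coproduct `Δ_λ : H(X,Ω) → H(X,Ω) ⊗ H(X,Ω)`. -/
noncomputable def Delta (lam : k) : RAlg k X Ω →ₗ[k] (RAlg k X Ω ⊗[k] RAlg k X Ω) :=
  (Finsupp.lsum k fun F => LinearMap.toSpanSingleton k _ (DeltaF k lam F)) ∘ₗ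
    (MonoidAlgebra.coeffLinearEquiv k).toLinearMap

/-- The counit `ε : H(X,Ω) → k`, sending the empty forest to `1` and every
nonempty forest to `0`. -/
noncomputable def eps : RAlg k X Ω →ₗ[k] k :=
  (Finsupp.lsum k fun F => LinearMap.toSpanSingleton k k
    (if (FreeMonoid.toList F).isEmpty then (1 : k) else 0)) ∘ₗ
    (MonoidAlgebra.coeffLinearEquiv k).toLinearMap

mutual
  /-- The list of subtrees of a tree, rooted at its vertices taken in the total
  order `≤_{h,r}` (preorder: roots first, then subtrees from left to right). -/
  def subT : PTree X Ω → List (PTree X Ω)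
    | .leafX x => [.leafX x]
    | .node ω ts => .node ω ts :: subF ts
  /-- The list of subtrees of a forest, rooted at its vertices in the order `≤_{h,r}`. -/
  def subF : List (PTree X Ω) → List (PTree X Ω)
    | [] => []
    | t :: ts => subT t ++ subF ts
end

/-- The vertices of a forest `F`, listed in the total order `≤_{h,r}`, each vertex
being recorded by the subtree it roots. -/
def vlist (F : RForest X Ω) : List (PTree X Ω) := subF (FreeMonoid.toList F)

/-- The number of vertices of a forest. -/
def numV (F : RForest X Ω) : ℕ := (vlist F).length

/-- The decoration of the root of a tree. -/
def rootDec : PTree X Ω → X ⊕ Ω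
  | .leafX x => Sum.inl x
  | .node ω _ => Sum.inr ω

/-- The decoration of the `i`-th vertex (in the order `≤_{h,r}`) of a forest. -/
def decorV (F : RForest X Ω) (i : Fin (numV F)) : X ⊕ Ω := rootDec ((vlist F).get i)

/-- The number of vertices of the subtree rooted at the `i`-th vertex of `F`. -/
def subSize (F : RForest X Ω) (i : Fin (numV F)) : ℕ := (subT ((vlist F).get i)).length

/-- The order `≤_h` on `V(F)`: `i ≤_h j` iff there is an oriented path from `i` to `j`,
edges being oriented from the roots towards the leaves.  In the preorder indexing, the
descendants of `i` are exactly the indices in `[i, i + subSize F i)`. -/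
def leh (F : RForest X Ω) (i j : Fin (numV F)) : Prop :=
  (i : ℕ) ≤ (j : ℕ) ∧ (j : ℕ) < (i : ℕ) + subSize F i

/-- The (reflexive) relation `≤_r` on `V(F)`: `i ≤_r j` iff `i = j`, or `i` and `j` are
not comparable for `≤_h` and `j` lies more to the right than `i` in the planar
representation of `F`. -/
def ler (F : RForest X Ω) (i j : Fin (numV F)) : Prop :=
  i = j ∨ (¬ leh F i j ∧ ¬ leh F j i ∧ i < j)

instance (F : RForest X Ω) (i j : Fin (numV F)) : Decidable (leh F i j) := by
  unfold leh; infer_instance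

/-- The set `V_X(F)` of vertices of `F` decorated by an element of `X`. -/
def VXset (F : RForest X Ω) : Finset (Fin (numV F)) :=
  Finset.univ.filter fun i => (decorV F i).isLeft

mutual
  /-- Restriction of a tree, whose vertices have preorder indices `off, off + 1, …`,
  to the set of vertices selected by `p`: each kept vertex receives an incoming edge
  from its smallest kept ancestor, if any; otherwise it becomes a root. -/
  def restT (p : ℕ → Bool) : PTree X Ω → ℕ → List (PTree X Ω)
    | .leafX x, off => if p off then [.leafX x] else []
    | .node ω ts, off =>
        if p off then [.node ω (restF p ts (off + 1))] else restF p ts (off + 1)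
  /-- Restriction of a forest to the set of vertices selected by `p`. -/
  def restF (p : ℕ → Bool) : List (PTree X Ω) → ℕ → List (PTree X Ω)
    | [], _ => []
    | t :: ts, off => restT p t off ++ restF p ts (off + (subT t).length)
end

/-- The induced subforest `F_I` of a forest `F` on a subset `I ⊆ V(F)`. -/
def indSub (F : RForest X Ω) (I : Finset (Fin (numV F))) : RForest X Ω :=
  FreeMonoid.ofList
    (restF (fun m => decide (∃ i ∈ I, (i : ℕ) = m)) (FreeMonoid.toList F) 0)

/-! ### Auxiliary combinatorics for restrictions -/

/-- count of `p`-true indices in `[off, off+n)` -/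
def cnt (p : ℕ → Bool) : ℕ → ℕ → ℕ
  | _, 0 => 0
  | off, n+1 => (if p off then 1 else 0) + cnt p (off+1) n

theorem cnt_succ (p : ℕ → Bool) (off n : ℕ) :
    cnt p off (n+1) = (if p off then 1 else 0) + cnt p (off+1) n := rfl

theorem cnt_add (p : ℕ → Bool) (off n m : ℕ) :
    cnt p off (n + m) = cnt p off n + cnt p (off + n) m := by
  induction n generalizing off with
  | zero => simp [cnt]
  | succ n ih =>
      have h : n + 1 + m = (n + m) + 1 := by omega
      rw [h, cnt_succ, cnt_succ, ih]
      have h2 : off + 1 + n = off + (n + 1) := by omega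
      rw [h2, Nat.add_assoc]

theorem subF_append (l₁ l₂ : List (PTree X Ω)) :
    subF (l₁ ++ l₂) = subF l₁ ++ subF l₂ := by
  induction l₁ with
  | nil => rfl
  | cons t ts ih => simp [subF, ih]

/-- number of vertices of a tree -/
abbrev lenT (t : PTree X Ω) : ℕ := (subT t).length
/-- number of vertices of a forest (as list of trees) -/
abbrev lenF (ts : List (PTree X Ω)) : ℕ := (subF ts).length

theorem lenF_nil : lenF ([] : List (PTree X Ω)) = 0 := rfl

theorem lenF_cons (t : PTree X Ω) (ts : List (PTree X Ω)) :
    lenF (t :: ts) = lenT t + lenF ts := by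
  simp [lenF, subF]

theorem lenF_singleton (t : PTree X Ω) : lenF [t] = lenT t := by
  simp [lenF_cons, lenF_nil]

theorem lenF_append (l₁ l₂ : List (PTree X Ω)) :
    lenF (l₁ ++ l₂) = lenF l₁ + lenF l₂ := by
  simp [lenF, subF_append]

theorem lenT_node (ω : Ω) (ts : List (PTree X Ω)) :
    lenT (PTree.node ω ts) = 1 + lenF ts := by
  simp [lenT, subT, lenF]; omega

theorem lenT_pos (t : PTree X Ω) : 0 < lenT t := by
  cases t with
  | leafX x => simp [lenT, subT]
  | node ω ts => rw [lenT_node]; omega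

theorem restF_append (p : ℕ → Bool) (l₁ l₂ : List (PTree X Ω)) (off : ℕ) :
    restF p (l₁ ++ l₂) off = restF p l₁ off ++ restF p l₂ (off + lenF l₁) := by
  induction l₁ generalizing off with
  | nil => simp [restF, lenF_nil]
  | cons t ts ih =>
      simp only [List.cons_append, restF, List.append_eq, ih, lenF_cons]
      rw [List.append_assoc, ← Nat.add_assoc]

mutual
theorem len_restT (t : PTree X Ω) (p : ℕ → Bool) (off : ℕ) :
    lenF (restT p t off) = cnt p off (lenT t) := by
  cases t with
  | leafX x =>
      by_cases h : p off <;>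
        simp [restT, h, lenF_singleton, lenF_nil, lenT, subT, cnt]
  | node ω ts =>
      rw [lenT_node, Nat.add_comm 1 (lenF ts), cnt_succ]
      by_cases h : p off
      · rw [restT, if_pos h, lenF_singleton, lenT_node, len_restF ts p (off+1),
          if_pos h, Nat.add_comm 1]
      · rw [restT, if_neg h, len_restF ts p (off+1), if_neg h]
        omega
termination_by sizeOf t

theorem len_restF (ts : List (PTree X Ω)) (p : ℕ → Bool) (off : ℕ) :
    lenF (restF p ts off) = cnt p off (lenF ts) := by
  cases ts with
  | nil => simp [restF, lenF_nil, cnt]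
  | cons t ts =>
      rw [lenF_cons, cnt_add]
      simp only [restF, lenF_append]
      rw [len_restT t p off, len_restF ts p (off + lenT t)]
termination_by sizeOf ts
end
mutual
theorem restT_congr (t : PTree X Ω) (p q : ℕ → Bool) (off : ℕ)
    (h : ∀ m, off ≤ m → m < off + lenT t → p m = q m) :
    restT p t off = restT q t off := by
  cases t with
  | leafX x =>
      have hp : p off = q off := h off le_rfl (by simp [lenT, subT])
      rw [restT, restT, hp]
  | node ω ts =>
      have hp : p off = q off := h off le_rfl (by have := lenT_pos (PTree.node ω ts); omega)
      have hc : restF p ts (off+1) = restF q ts (off+1) := by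
        refine restF_congr ts p q (off+1) (fun m hm1 hm2 => h m (by omega) ?_)
        rw [lenT_node]; omega
      rw [restT, restT, hp, hc]
termination_by sizeOf t

theorem restF_congr (ts : List (PTree X Ω)) (p q : ℕ → Bool) (off : ℕ)
    (h : ∀ m, off ≤ m → m < off + lenF ts → p m = q m) :
    restF p ts off = restF q ts off := by
  cases ts with
  | nil => rfl
  | cons t ts =>
      have h1 : restT p t off = restT q t off := by
        refine restT_congr t p q off (fun m hm1 hm2 => h m hm1 ?_)
        rw [lenF_cons]; omega
      have h2 : restF p ts (off + lenT t) = restF q ts (off + lenT t) := by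
        refine restF_congr ts p q _ (fun m hm1 hm2 => h m (by omega) ?_)
        rw [lenF_cons]; omega
      rw [restF, restF, h1, h2]
termination_by sizeOf ts
end

mutual
theorem restT_true (t : PTree X Ω) (p : ℕ → Bool) (off : ℕ)
    (h : ∀ m, off ≤ m → m < off + lenT t → p m = true) :
    restT p t off = [t] := by
  cases t with
  | leafX x =>
      rw [restT, h off le_rfl (by simp [lenT, subT]), if_pos rfl]
  | node ω ts =>
      have hp : p off = true := h off le_rfl (by have := lenT_pos (PTree.node ω ts); omega)
      have hc : restF p ts (off+1) = ts := by
        refine restF_true ts p (off+1) (fun m hm1 hm2 => h m (by omega) ?_)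
        rw [lenT_node]; omega
      rw [restT, hp, if_pos rfl, hc]
termination_by sizeOf t

theorem restF_true (ts : List (PTree X Ω)) (p : ℕ → Bool) (off : ℕ)
    (h : ∀ m, off ≤ m → m < off + lenF ts → p m = true) :
    restF p ts off = ts := by
  cases ts with
  | nil => rfl
  | cons t ts =>
      have h1 : restT p t off = [t] := by
        refine restT_true t p off (fun m hm1 hm2 => h m hm1 ?_)
        rw [lenF_cons]; omega
      have h2 : restF p ts (off + lenT t) = ts := by
        refine restF_true ts p _ (fun m hm1 hm2 => h m (by omega) ?_)
        rw [lenF_cons]; omega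
      rw [restF, h1, h2]; rfl
termination_by sizeOf ts
end

mutual
theorem restT_false (t : PTree X Ω) (p : ℕ → Bool) (off : ℕ)
    (h : ∀ m, off ≤ m → m < off + lenT t → p m = false) :
    restT p t off = [] := by
  cases t with
  | leafX x =>
      rw [restT, h off le_rfl (by simp [lenT, subT])]
      simp
  | node ω ts =>
      have hp : p off = false := h off le_rfl (by have := lenT_pos (PTree.node ω ts); omega)
      have hc : restF p ts (off+1) = [] := by
        refine restF_false ts p (off+1) (fun m hm1 hm2 => h m (by omega) ?_)
        rw [lenT_node]; omega
      rw [restT, hp, hc]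
      simp
termination_by sizeOf t

theorem restF_false (ts : List (PTree X Ω)) (p : ℕ → Bool) (off : ℕ)
    (h : ∀ m, off ≤ m → m < off + lenF ts → p m = false) :
    restF p ts off = [] := by
  cases ts with
  | nil => rfl
  | cons t ts =>
      have h1 : restT p t off = [] := by
        refine restT_false t p off (fun m hm1 hm2 => h m hm1 ?_)
        rw [lenF_cons]; omega
      have h2 : restF p ts (off + lenT t) = [] := by
        refine restF_false ts p _ (fun m hm1 hm2 => h m (by omega) ?_)
        rw [lenF_cons]; omega
      rw [restF, h1, h2]; rfl
termination_by sizeOf ts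
end

/-! Transitivity of restriction. -/
mutual
theorem restF_restT (t : PTree X Ω) (p q : ℕ → Bool) (off qoff : ℕ) :
    restF q (restT p t off) qoff
      = restT (fun m => p m && q (qoff + cnt p off (m - off))) t off := by
  have hz : ∀ a : ℕ, cnt p a 0 = 0 := fun a => rfl
  have hoo : cnt p off (off - off) = 0 := by rw [Nat.sub_self, hz]
  cases t with
  | leafX x =>
      by_cases hp : p off <;> by_cases hq : q qoff <;>
        simp [restT, restF, hp, hq, hoo, hz]
  | node ω ts =>
      by_cases hp : p off
      · have hcong : restF (fun m => p m && q (qoff + 1 + cnt p (off+1) (m - (off+1)))) ts (off+1)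
            = restF (fun m => p m && q (qoff + cnt p off (m - off))) ts (off+1) := by
          refine restF_congr ts _ _ _ (fun m hm1 hm2 => ?_)
          have harith : qoff + cnt p off (m - off)
              = qoff + 1 + cnt p (off+1) (m - (off+1)) := by
            have hd : m - off = (m - (off+1)) + 1 := by omega
            rw [hd, cnt_succ, hp]
            simp
            omega
          rw [harith]
        simp only [restT, if_pos hp, restF, List.append_nil]
        rw [restF_restF ts p q (off+1) (qoff+1), hcong]
        by_cases hq : q qoff <;> simp [hq, hoo, hp, hz]
      · have hcong : restF (fun m => p m && q (qoff + cnt p (off+1) (m - (off+1)))) ts (off+1)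
            = restF (fun m => p m && q (qoff + cnt p off (m - off))) ts (off+1) := by
          refine restF_congr ts _ _ _ (fun m hm1 hm2 => ?_)
          have harith : qoff + cnt p off (m - off)
              = qoff + cnt p (off+1) (m - (off+1)) := by
            have hd : m - off = (m - (off+1)) + 1 := by omega
            rw [hd, cnt_succ, if_neg hp]
            simp
          rw [harith]
        simp only [restT, if_neg hp]
        rw [restF_restF ts p q (off+1) qoff, hcong]
        simp [hp, hoo, hz]
termination_by sizeOf t

theorem restF_restF (ts : List (PTree X Ω)) (p q : ℕ → Bool) (off qoff : ℕ) :
    restF q (restF p ts off) qoff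
      = restF (fun m => p m && q (qoff + cnt p off (m - off))) ts off := by
  cases ts with
  | nil => rfl
  | cons t ts =>
      rw [restF, restF_append, restF_restT t p q off qoff, len_restT,
        restF_restF ts p q (off + lenT t) (qoff + cnt p off (lenT t))]
      show _ = restF _ (t :: ts) off
      rw [restF]
      congr 1
      refine restF_congr ts _ _ _ (fun m hm1 hm2 => ?_)
      have hd : m - off = lenT t + (m - (off + lenT t)) := by omega
      rw [hd, cnt_add]
      have harith : qoff + (cnt p off (lenT t) + cnt p (off + lenT t) (m - (off + lenT t)))
          = qoff + cnt p off (lenT t) + cnt p (off + lenT t) (m - (off + lenT t)) := by omega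
      rw [harith]
termination_by sizeOf ts
end
/-! ### Algebraic preliminaries -/

variable {k}

/-- basis element attached to a list of trees -/
noncomputable def ofL (L : List (PTree X Ω)) : RAlg k X Ω :=
  ofF k (FreeMonoid.ofList L)

theorem ofF_mul (F G : RForest X Ω) : ofF k (F * G) = ofF k F * ofF k G :=
  map_mul (MonoidAlgebra.of k (RForest X Ω)) F G

theorem ofF_one : ofF k (1 : RForest X Ω) = 1 :=
  map_one (MonoidAlgebra.of k (RForest X Ω))

theorem ofL_nil : (ofL [] : RAlg k X Ω) = 1 := ofF_one

theorem ofL_append (l₁ l₂ : List (PTree X Ω)) :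
    (ofL (l₁ ++ l₂) : RAlg k X Ω) = ofL l₁ * ofL l₂ := by
  rw [ofL, ofL, ofL, ← ofF_mul]
  rfl

theorem Bplus_ofL (ω : Ω) (L : List (PTree X Ω)) :
    Bplus k ω (ofL L : RAlg k X Ω) = ofL [PTree.node ω L] := by
  show MonoidAlgebra.mapDomainLinearMap k k (graft ω) (MonoidAlgebra.single (FreeMonoid.ofList L) 1) = _
  rw [MonoidAlgebra.mapDomainLinearMap_single]
  show MonoidAlgebra.single (graft ω (FreeMonoid.ofList L)) 1 = _
  rw [graft, FreeMonoid.toList_ofList]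
  rfl

theorem Delta_ofF (lam : k) (F : RForest X Ω) :
    Delta k lam (ofF k F) = DeltaF k lam F := by
  show Finsupp.lsum k (fun F => LinearMap.toSpanSingleton k (RAlg k X Ω ⊗[k] RAlg k X Ω)
    (DeltaF k lam F)) (Finsupp.single F (1:k)) = _
  rw [Finsupp.lsum_single, LinearMap.toSpanSingleton_apply_one]

theorem eps_ofF (F : RForest X Ω) :
    eps k (ofF k F) = if (FreeMonoid.toList F).isEmpty then (1:k) else 0 := by
  show Finsupp.lsum k (fun F : RForest X Ω => LinearMap.toSpanSingleton k k
    (if (FreeMonoid.toList F).isEmpty then (1 : k) else 0)) (Finsupp.single F (1:k)) = _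
  rw [Finsupp.lsum_single, LinearMap.toSpanSingleton_apply_one]

theorem DeltaT_node (lam : k) (ω : Ω) (ts : List (PTree X Ω)) :
    DeltaT k lam (PTree.node ω ts)
      = ((TensorProduct.map (Bplus k ω) LinearMap.id
        + TensorProduct.map LinearMap.id (Bplus k ω) :
          (RAlg k X Ω ⊗[k] RAlg k X Ω) →ₗ[k] (RAlg k X Ω ⊗[k] RAlg k X Ω)))
        ((ts.map (DeltaT k lam)).prod) := by
  rw [DeltaT]
  congr 2
  exact List.attach_map_val (l := ts) (f := DeltaT k lam)
/-! ### The coproduct as a sum over subsets -/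

theorem sum_powerset_split {M : Type u'} [AddCommMonoid M] (a m b : ℕ)
    (h1 : a ≤ m) (h2 : m ≤ b) (f : Finset ℕ → M) :
    ∑ w ∈ (Finset.Ico a b).powerset, f w
      = ∑ s ∈ (Finset.Ico a m).powerset, ∑ u ∈ (Finset.Ico m b).powerset, f (s ∪ u) := by
  have hd : Disjoint (Finset.Ico a m) (Finset.Ico m b) :=
    Finset.Ico_disjoint_Ico_consecutive a m b
  rw [← Finset.sum_product']
  rw [← Finset.Ico_union_Ico_eq_Ico h1 h2]
  refine Finset.sum_nbij' (fun w => (w ∩ Finset.Ico a m, w ∩ Finset.Ico m b))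
    (fun x => x.1 ∪ x.2) ?_ ?_ ?_ ?_ ?_
  · intro w hw
    rw [Finset.mem_product]
    exact ⟨Finset.mem_powerset.mpr Finset.inter_subset_right,
      Finset.mem_powerset.mpr Finset.inter_subset_right⟩
  · intro x hx
    rw [Finset.mem_product] at hx
    exact Finset.mem_powerset.mpr
      (Finset.union_subset_union (Finset.mem_powerset.mp hx.1) (Finset.mem_powerset.mp hx.2))
  · intro w hw
    dsimp only
    rw [← Finset.inter_union_distrib_left]
    exact Finset.inter_eq_left.mpr (Finset.mem_powerset.mp hw)
  · intro x hx
    rw [Finset.mem_product] at hx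
    have h1' := Finset.mem_powerset.mp hx.1
    have h2' := Finset.mem_powerset.mp hx.2
    have e1 : (x.1 ∪ x.2) ∩ Finset.Ico a m = x.1 := by
      rw [Finset.union_inter_distrib_right, Finset.inter_eq_left.mpr h1',
        Finset.disjoint_iff_inter_eq_empty.mp (Finset.disjoint_of_subset_left h2' hd.symm),
        Finset.union_empty]
    have e2 : (x.1 ∪ x.2) ∩ Finset.Ico m b = x.2 := by
      rw [Finset.union_inter_distrib_right, Finset.inter_eq_left.mpr h2',
        Finset.disjoint_iff_inter_eq_empty.mp (Finset.disjoint_of_subset_left h1' hd),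
        Finset.empty_union]
    rw [e1, e2]
  · intro w hw
    have : w ∩ Finset.Ico a m ∪ w ∩ Finset.Ico m b = w := by
      rw [← Finset.inter_union_distrib_left]
      exact Finset.inter_eq_left.mpr (Finset.mem_powerset.mp hw)
    rw [this]

/-- predicate of membership in a finite set of naturals -/
def inP (s : Finset ℕ) : ℕ → Bool := fun m => decide (m ∈ s)
/-- predicate of non-membership -/
def outP (s : Finset ℕ) : ℕ → Bool := fun m => decide (m ∉ s)

mutual
theorem deltaT_eq (t : PTree X Ω) (off : ℕ) :
    DeltaT k 0 t = ∑ s ∈ (Finset.Ico off (off + lenT t)).powerset,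
      (ofL (restT (inP s) t off) ⊗ₜ[k] ofL (restT (outP s) t off)) := by
  cases t with
  | leafX x =>
      have hlen : lenT (PTree.leafX x : PTree X Ω) = 1 := by simp [lenT, subT]
      rw [hlen, Nat.Ico_succ_singleton]
      rw [show ({off} : Finset ℕ) = insert off ∅ from rfl]
      rw [Finset.sum_powerset_insert (Finset.notMem_empty off)]
      rw [Finset.powerset_empty, Finset.sum_singleton, Finset.sum_singleton]
      have e1 : restT (inP ∅) (PTree.leafX x : PTree X Ω) off = [] := by
        simp [restT, inP]
      have e2 : restT (outP ∅) (PTree.leafX x : PTree X Ω) off = [PTree.leafX x] := by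
        simp [restT, outP]
      have e3 : restT (inP (insert off ∅)) (PTree.leafX x : PTree X Ω) off
          = [PTree.leafX x] := by simp [restT, inP]
      have e4 : restT (outP (insert off ∅)) (PTree.leafX x : PTree X Ω) off = [] := by
        simp [restT, outP]
      rw [e1, e2, e3, e4, ofL_nil]
      have e5 : (ofL [PTree.leafX x] : RAlg k X Ω) = ofF k (leafF x) := by
        rw [ofL, leafF]; rfl
      rw [e5, DeltaT]
      rw [zero_smul, add_zero, add_comm]
  | node ω ts =>
      rw [DeltaT_node, deltaF_eq ts (off + 1), map_sum]
      rw [lenT_node, ← Nat.add_assoc]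
      have hlt : off < off + 1 + lenF ts := by omega
      rw [← Finset.insert_Ico_add_one_left_eq_Ico hlt]
      rw [Finset.sum_powerset_insert (by simp)]
      have hterm : ∀ s ∈ (Finset.Ico (off+1) (off+1+lenF ts)).powerset,
          (TensorProduct.map (Bplus k ω) LinearMap.id
            + TensorProduct.map LinearMap.id (Bplus k ω) :
            (RAlg k X Ω ⊗[k] RAlg k X Ω) →ₗ[k] (RAlg k X Ω ⊗[k] RAlg k X Ω))
            (ofL (restF (inP s) ts (off+1)) ⊗ₜ[k] ofL (restF (outP s) ts (off+1)))
          = (ofL (restT (inP s) (PTree.node ω ts) off)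
              ⊗ₜ[k] ofL (restT (outP s) (PTree.node ω ts) off))
            + (ofL (restT (inP (insert off s)) (PTree.node ω ts) off)
              ⊗ₜ[k] ofL (restT (outP (insert off s)) (PTree.node ω ts) off)) := by
        intro s hs
        have hsub := Finset.mem_powerset.mp hs
        have hoff : off ∉ s := by
          intro h
          have := hsub h
          rw [Finset.mem_Ico] at this
          omega
        have hin : inP s off = false := by simp [inP, hoff]
        have hout : outP s off = true := by simp [outP, hoff]
        have hin' : inP (insert off s) off = true := by simp [inP]
        have hout' : outP (insert off s) off = false := by simp [outP]
        have hcong1 : restF (inP (insert off s)) ts (off+1) = restF (inP s) ts (off+1) := by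
          refine restF_congr ts _ _ _ (fun m hm1 hm2 => ?_)
          simp only [inP, decide_eq_decide, Finset.mem_insert]
          constructor
          · rintro (h | h)
            · omega
            · exact h
          · exact Or.inr
        have hcong2 : restF (outP (insert off s)) ts (off+1) = restF (outP s) ts (off+1) := by
          refine restF_congr ts _ _ _ (fun m hm1 hm2 => ?_)
          simp only [outP, decide_eq_decide, Finset.mem_insert]
          constructor
          · intro h hm
            exact h (Or.inr hm)
          · intro h hm
            rcases hm with h' | h'
            · omega
            · exact h h'
        rw [LinearMap.add_apply, TensorProduct.map_tmul, TensorProduct.map_tmul]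
        rw [LinearMap.id_apply, LinearMap.id_apply, Bplus_ofL, Bplus_ofL]
        rw [restT, restT, restT, restT, hin, hout, hin', hout']
        rw [if_neg (by simp), if_pos rfl, if_pos rfl, if_neg (by simp)]
        rw [hcong1, hcong2]
        rw [add_comm]
      rw [Finset.sum_congr rfl hterm, Finset.sum_add_distrib]
termination_by sizeOf t

theorem deltaF_eq (ts : List (PTree X Ω)) (off : ℕ) :
    ((ts.map (DeltaT k 0)).prod : RAlg k X Ω ⊗[k] RAlg k X Ω)
      = ∑ s ∈ (Finset.Ico off (off + lenF ts)).powerset,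
        (ofL (restF (inP s) ts off) ⊗ₜ[k] ofL (restF (outP s) ts off)) := by
  cases ts with
  | nil =>
      rw [show lenF ([] : List (PTree X Ω)) = 0 from rfl]
      simp only [List.map_nil, List.prod_nil, Nat.add_zero, Finset.Ico_self,
        Finset.powerset_empty, Finset.sum_singleton]
      rw [show restF (inP ∅) ([] : List (PTree X Ω)) off = [] from rfl,
        show restF (outP ∅) ([] : List (PTree X Ω)) off = [] from rfl, ofL_nil]
      rw [Algebra.TensorProduct.one_def]
  | cons t ts =>
      rw [List.map_cons, List.prod_cons, deltaT_eq t off, deltaF_eq ts (off + lenT t),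
        Finset.sum_mul_sum]
      rw [lenF_cons, ← Nat.add_assoc]
      rw [sum_powerset_split off (off + lenT t) (off + lenT t + lenF ts)
        (by omega) (by omega)]
      refine Finset.sum_congr rfl (fun s hs => Finset.sum_congr rfl (fun u hu => ?_))
      have hsub := Finset.mem_powerset.mp hs
      have husub := Finset.mem_powerset.mp hu
      rw [Algebra.TensorProduct.tmul_mul_tmul, ← ofL_append, ← ofL_append]
      have hc1 : restT (inP (s ∪ u)) t off = restT (inP s) t off := by
        refine restT_congr t _ _ _ (fun m hm1 hm2 => ?_)
        simp only [inP, decide_eq_decide, Finset.mem_union]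
        constructor
        · rintro (h | h)
          · exact h
          · have := husub h; rw [Finset.mem_Ico] at this; omega
        · exact Or.inl
      have hc2 : restF (inP (s ∪ u)) ts (off + lenT t) = restF (inP u) ts (off + lenT t) := by
        refine restF_congr ts _ _ _ (fun m hm1 hm2 => ?_)
        simp only [inP, decide_eq_decide, Finset.mem_union]
        constructor
        · rintro (h | h)
          · have := hsub h; rw [Finset.mem_Ico] at this; omega
          · exact h
        · exact Or.inr
      have hc3 : restT (outP (s ∪ u)) t off = restT (outP s) t off := by
        refine restT_congr t _ _ _ (fun m hm1 hm2 => ?_)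
        simp only [outP, decide_eq_decide, Finset.mem_union]
        constructor
        · intro h hm; exact h (Or.inl hm)
        · intro h hm
          rcases hm with h' | h'
          · exact h h'
          · have := husub h'; rw [Finset.mem_Ico] at this; omega
      have hc4 : restF (outP (s ∪ u)) ts (off + lenT t) = restF (outP u) ts (off + lenT t) := by
        refine restF_congr ts _ _ _ (fun m hm1 hm2 => ?_)
        simp only [outP, decide_eq_decide, Finset.mem_union]
        constructor
        · intro h hm; exact h (Or.inr hm)
        · intro h hm
          rcases hm with h' | h'
          · have := hsub h'; rw [Finset.mem_Ico] at this; omega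
          · exact h h'
      rw [show restF (inP (s ∪ u)) (t :: ts) off
          = restT (inP (s ∪ u)) t off ++ restF (inP (s ∪ u)) ts (off + lenT t) from rfl]
      rw [show restF (outP (s ∪ u)) (t :: ts) off
          = restT (outP (s ∪ u)) t off ++ restF (outP (s ∪ u)) ts (off + lenT t) from rfl]
      rw [hc1, hc2, hc3, hc4]
termination_by sizeOf ts
end
/-! ### Induced subforests and the coproduct -/

theorem cnt_one (p : ℕ → Bool) (a : ℕ) : cnt p a 1 = if p a then 1 else 0 := by
  rw [cnt_succ]
  show _ + cnt p (a+1) 0 = _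
  rw [show cnt p (a+1) 0 = 0 from rfl, Nat.add_zero]

theorem cnt_succ' (p : ℕ → Bool) (off n : ℕ) :
    cnt p off (n + 1) = cnt p off n + (if p (off + n) then 1 else 0) := by
  rw [cnt_add, cnt_one]

theorem cnt_eq_card (p : ℕ → Bool) (off n : ℕ) :
    cnt p off n = ((Finset.range n).filter (fun j => p (off + j))).card := by
  induction n with
  | zero => rfl
  | succ n ih =>
      rw [cnt_succ', ih, Finset.range_add_one, Finset.filter_insert]
      by_cases h : p (off + n)
      · rw [if_pos h, if_pos h, Finset.card_insert_of_notMem (by simp)]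
      · rw [if_neg h, if_neg h, Nat.add_zero]

theorem numV_toList (F : RForest X Ω) : numV F = lenF (FreeMonoid.toList F) := rfl

theorem indSub_eq (F : RForest X Ω) (I : Finset (Fin (numV F))) :
    indSub F I = FreeMonoid.ofList
      (restF (inP (I.image Fin.val)) (FreeMonoid.toList F) 0) := by
  rw [indSub]
  congr 1
  refine congrFun (congrFun (congrArg _ ?_) _) _
  funext m
  rw [inP, decide_eq_decide]
  simp [Finset.mem_image]

theorem indSub_empty (F : RForest X Ω) : indSub F (∅ : Finset (Fin (numV F))) = 1 := by
  rw [indSub_eq]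
  rw [restF_false _ _ _ (fun m _ _ => by simp [inP])]
  rfl

theorem indSub_univ (F : RForest X Ω) : indSub F (Finset.univ : Finset (Fin (numV F))) = F := by
  rw [indSub_eq]
  rw [restF_true _ _ _ (fun m hm1 hm2 => ?_), FreeMonoid.ofList_toList]
  simp only [inP, decide_eq_true_eq]
  rw [Finset.mem_image]
  exact ⟨⟨m, by rw [numV_toList]; omega⟩, Finset.mem_univ _, rfl⟩

theorem numV_indSub (F : RForest X Ω) (I : Finset (Fin (numV F))) :
    numV (indSub F I) = I.card := by
  rw [indSub_eq, numV_toList, FreeMonoid.toList_ofList, len_restF, cnt_eq_card]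
  rw [show ((Finset.range (lenF (FreeMonoid.toList F))).filter fun j => inP (I.image Fin.val) (0 + j))
      = I.image Fin.val from ?_]
  · rw [Finset.card_image_of_injective _ Fin.val_injective]
  · ext m
    simp only [Finset.mem_filter, Finset.mem_range, inP, Nat.zero_add, decide_eq_true_eq,
      Finset.mem_image]
    constructor
    · rintro ⟨_, h⟩; exact h
    · rintro ⟨i, hi, rfl⟩
      exact ⟨i.isLt, ⟨i, hi, rfl⟩⟩

theorem numV_one : numV (1 : RForest X Ω) = 0 := rfl

theorem numV_pos (F : RForest X Ω) (hF : F ≠ 1) : 0 < numV F := by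
  rw [numV_toList]
  cases h : FreeMonoid.toList F with
  | nil =>
      exfalso
      apply hF
      rw [← FreeMonoid.ofList_toList F, h]
      rfl
  | cons t ts =>
      rw [lenF_cons]
      have := lenT_pos t
      omega

theorem indSub_ne_one (F : RForest X Ω) (I : Finset (Fin (numV F))) (hI : I ≠ ∅) :
    indSub F I ≠ 1 := by
  intro h
  have h1 : numV (indSub F I) = 0 := by rw [h, numV_one]
  rw [numV_indSub] at h1
  exact hI (Finset.card_eq_zero.mp h1)

/-- The coproduct at `λ = 0` of a basis element, as a sum over subsets of vertices. -/
theorem Delta_indSub (F : RForest X Ω) :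
    Delta k 0 (ofF k F) = ∑ I : Finset (Fin (numV F)),
      ofF k (indSub F I) ⊗ₜ[k] ofF k (indSub F Iᶜ) := by
  rw [Delta_ofF, DeltaF, deltaF_eq (FreeMonoid.toList F) 0]
  rw [show (0 + lenF (FreeMonoid.toList F)) = numV F from by rw [numV_toList]; omega]
  rw [show Finset.Ico 0 (numV F) = Finset.range (numV F) from by
    rw [Finset.range_eq_Ico]]
  refine Finset.sum_nbij' (fun s => Finset.univ.filter (fun i : Fin (numV F) => (i : ℕ) ∈ s))
    (fun I => I.image Fin.val) (fun s hs => Finset.mem_univ _) ?_ ?_ ?_ ?_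
  · intro I _
    rw [Finset.mem_powerset]
    intro m hm
    rw [Finset.mem_image] at hm
    obtain ⟨i, _, rfl⟩ := hm
    rw [Finset.mem_range]
    exact i.isLt
  · intro s hs
    rw [Finset.mem_powerset] at hs
    ext m
    simp only [Finset.mem_image, Finset.mem_filter, Finset.mem_univ, true_and]
    constructor
    · rintro ⟨i, hi, rfl⟩; exact hi
    · intro hm
      have := hs hm
      rw [Finset.mem_range] at this
      exact ⟨⟨m, this⟩, hm, rfl⟩
  · intro I _
    ext i
    simp only [Finset.mem_filter, Finset.mem_univ, true_and, Finset.mem_image]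
    constructor
    · rintro ⟨j, hj, hji⟩
      rwa [← Fin.val_injective hji]
    · intro hi
      exact ⟨i, hi, rfl⟩
  · intro s hs
    rw [Finset.mem_powerset] at hs
    have hval : (Finset.univ.filter (fun i : Fin (numV F) => (i : ℕ) ∈ s)).image Fin.val = s := by
      ext m
      simp only [Finset.mem_image, Finset.mem_filter, Finset.mem_univ, true_and]
      constructor
      · rintro ⟨i, hi, rfl⟩; exact hi
      · intro hm
        have := hs hm
        rw [Finset.mem_range] at this
        exact ⟨⟨m, this⟩, hm, rfl⟩
    congr 1
    · rw [indSub_eq, hval]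
      rfl
    · rw [indSub_eq, ofF, ofL, ofF]
      congr 2
      refine restF_congr _ _ _ _ (fun m hm1 hm2 => ?_)
      rw [outP, inP, decide_eq_decide]
      have hmn : m < numV F := by rw [numV_toList]; omega
      simp only [Finset.mem_image, Finset.mem_compl, Finset.mem_filter, Finset.mem_univ,
        true_and]
      constructor
      · intro hm
        exact ⟨⟨m, hmn⟩, hm, rfl⟩
      · rintro ⟨i, hi, rfl⟩
        exact hi
/-! ### Rank and transitivity of induced subforests -/

/-- rank of a vertex inside a subset -/
def rnkF {n : ℕ} (I : Finset (Fin n)) (x : Fin n) : ℕ := (I.filter (· < x)).card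

theorem rnkF_lt {n : ℕ} (I : Finset (Fin n)) {x : Fin n} (hx : x ∈ I) :
    rnkF I x < I.card := by
  apply Finset.card_lt_card
  refine (Finset.ssubset_iff_of_subset (Finset.filter_subset _ _)).mpr ⟨x, hx, by simp⟩

theorem rnkF_lt_rnkF {n : ℕ} (I : Finset (Fin n)) {x y : Fin n} (hx : x ∈ I) (hxy : x < y) :
    rnkF I x < rnkF I y := by
  apply Finset.card_lt_card
  have hsub : I.filter (· < x) ⊆ I.filter (· < y) := by
    intro z hz
    rw [Finset.mem_filter] at hz ⊢
    exact ⟨hz.1, lt_trans hz.2 hxy⟩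
  exact (Finset.ssubset_iff_of_subset hsub).mpr ⟨x, Finset.mem_filter.mpr ⟨hx, hxy⟩, by simp⟩

theorem rnkF_injOn {n : ℕ} (I : Finset (Fin n)) {x y : Fin n} (hx : x ∈ I) (hy : y ∈ I)
    (h : rnkF I x = rnkF I y) : x = y := by
  rcases lt_trichotomy x y with h' | h' | h'
  · exact absurd h (Nat.ne_of_lt (rnkF_lt_rnkF I hx h'))
  · exact h'
  · exact absurd h.symm (Nat.ne_of_lt (rnkF_lt_rnkF I hy h'))

theorem rnkF_surj {n : ℕ} (I : Finset (Fin n)) (j : ℕ) (hj : j < I.card) :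
    ∃ x ∈ I, rnkF I x = j := by
  classical
  let ρ : {x // x ∈ I} → Fin I.card := fun x => ⟨rnkF I x.1, rnkF_lt I x.2⟩
  have hinj : Function.Injective ρ := by
    intro a b hab
    have : rnkF I a.1 = rnkF I b.1 := congrArg Fin.val hab
    exact Subtype.ext (rnkF_injOn I a.2 b.2 this)
  have hbij : Function.Bijective ρ :=
    (Fintype.bijective_iff_injective_and_card ρ).mpr
      ⟨hinj, by simp [Fintype.card_coe]⟩
  obtain ⟨x, hx⟩ := hbij.2 ⟨j, hj⟩
  exact ⟨x.1, x.2, congrArg Fin.val hx⟩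

theorem cnt_inP_eq_rnkF (F : RForest X Ω) (I : Finset (Fin (numV F)))
    {m : ℕ} (hm : m < numV F) :
    cnt (inP (I.image Fin.val)) 0 m = rnkF I ⟨m, hm⟩ := by
  rw [cnt_eq_card, rnkF]
  rw [show (I.filter (· < (⟨m, hm⟩ : Fin (numV F)))).card
      = ((I.filter (· < (⟨m, hm⟩ : Fin (numV F)))).image Fin.val).card from
    (Finset.card_image_of_injective _ Fin.val_injective).symm]
  congr 1
  ext j
  simp only [Finset.mem_filter, Finset.mem_range, inP, Nat.zero_add, decide_eq_true_eq,
    Finset.mem_image, Fin.lt_def]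
  constructor
  · rintro ⟨hjm, x, hx, rfl⟩
    exact ⟨x, ⟨hx, hjm⟩, rfl⟩
  · rintro ⟨x, ⟨hx, hxm⟩, rfl⟩
    exact ⟨hxm, x, hx, rfl⟩

/-- Transitivity of induced subforests. -/
theorem indSub_indSub (F : RForest X Ω) (I : Finset (Fin (numV F)))
    (M : Finset (Fin (numV (indSub F I)))) :
    indSub (indSub F I) M
      = indSub F (I.filter (fun x => ∃ j ∈ M, (j : ℕ) = rnkF I x)) := by
  classical
  rw [indSub_eq (indSub F I) M]
  have htl : FreeMonoid.toList (indSub F I)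
      = restF (inP (I.image Fin.val)) (FreeMonoid.toList F) 0 := by
    rw [indSub_eq F I, FreeMonoid.toList_ofList]
  rw [htl, restF_restF, indSub_eq F (I.filter (fun x => ∃ j ∈ M, (j : ℕ) = rnkF I x))]
  congr 1
  refine restF_congr _ _ _ _ (fun m hm1 hm2 => ?_)
  have hmn : m < numV F := by rw [numV_toList]; omega
  rw [Nat.sub_zero, Nat.zero_add, cnt_inP_eq_rnkF F I hmn]
  rw [show inP (I.image Fin.val) m
      = decide ((⟨m, hmn⟩ : Fin (numV F)) ∈ I) from by
    rw [inP, decide_eq_decide]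
    simp only [Finset.mem_image]
    constructor
    · rintro ⟨x, hx, hxm⟩
      rwa [show (⟨m, hmn⟩ : Fin (numV F)) = x from (Fin.ext hxm.symm : _)]
    · intro h; exact ⟨⟨m, hmn⟩, h, rfl⟩]
  rw [show inP (M.image Fin.val) (rnkF I ⟨m, hmn⟩)
      = decide (∃ j ∈ M, (j : ℕ) = rnkF I ⟨m, hmn⟩) from by
    rw [inP, decide_eq_decide]
    simp only [Finset.mem_image]]
  rw [show inP ((I.filter (fun x => ∃ j ∈ M, (j : ℕ) = rnkF I x)).image Fin.val) m
      = decide ((⟨m, hmn⟩ : Fin (numV F)) ∈ I ∧ ∃ j ∈ M, (j : ℕ) = rnkF I ⟨m, hmn⟩) from by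
    rw [inP, decide_eq_decide]
    simp only [Finset.mem_image, Finset.mem_filter]
    constructor
    · rintro ⟨x, ⟨hxI, hxM⟩, hxm⟩
      have : (⟨m, hmn⟩ : Fin (numV F)) = x := Fin.ext hxm.symm
      rw [this]
      exact ⟨hxI, hxM⟩
    · rintro ⟨h1, h2⟩
      exact ⟨⟨m, hmn⟩, ⟨h1, h2⟩, rfl⟩]
  rcases Decidable.em ((⟨m, hmn⟩ : Fin (numV F)) ∈ I) with h | h <;>
    rcases Decidable.em (∃ j ∈ M, (j : ℕ) = rnkF I ⟨m, hmn⟩) with h' | h' <;>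
    simp [h, h']
/-! ### The subset correspondence for an induced subforest -/

section PsiPhi

variable (F : RForest X Ω) (I : Finset (Fin (numV F)))

/-- subsets of vertices of `F_I` as subsets of `I` -/
def psiS (M : Finset (Fin (numV (indSub F I)))) : Finset (Fin (numV F)) :=
  I.filter (fun x => ∃ j ∈ M, (j : ℕ) = rnkF I x)

/-- subsets of `I` as subsets of vertices of `F_I` -/
def phiS (K : Finset (Fin (numV F))) : Finset (Fin (numV (indSub F I))) :=
  Finset.univ.filter (fun j => ∃ x ∈ K, rnkF I x = (j : ℕ))

theorem indSub_psiS (M : Finset (Fin (numV (indSub F I)))) :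
    indSub (indSub F I) M = indSub F (psiS F I M) := indSub_indSub F I M

theorem psiS_subset (M : Finset (Fin (numV (indSub F I)))) : psiS F I M ⊆ I :=
  Finset.filter_subset _ _

theorem mem_psiS {M : Finset (Fin (numV (indSub F I)))} {x : Fin (numV F)} :
    x ∈ psiS F I M ↔ x ∈ I ∧ ∃ j ∈ M, (j : ℕ) = rnkF I x := by
  rw [psiS, Finset.mem_filter]

theorem psiS_phiS {K : Finset (Fin (numV F))} (hK : K ⊆ I) : psiS F I (phiS F I K) = K := by
  ext x
  rw [mem_psiS]
  simp only [phiS, Finset.mem_filter, Finset.mem_univ, true_and]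
  constructor
  · rintro ⟨hxI, j, ⟨y, hyK, hyj⟩, hjx⟩
    have : rnkF I y = rnkF I x := by omega
    rwa [← rnkF_injOn I (hK hyK) hxI this]
  · intro hx
    have hr : rnkF I x < numV (indSub F I) := by
      rw [numV_indSub]; exact rnkF_lt I (hK hx)
    exact ⟨hK hx, ⟨rnkF I x, hr⟩, ⟨x, hx, rfl⟩, rfl⟩

theorem phiS_psiS (M : Finset (Fin (numV (indSub F I)))) : phiS F I (psiS F I M) = M := by
  ext j
  simp only [phiS, Finset.mem_filter, Finset.mem_univ, true_and]
  constructor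
  · rintro ⟨x, hx, hxj⟩
    rw [mem_psiS] at hx
    obtain ⟨hxI, j', hj', hj'x⟩ := hx
    have : j' = j := Fin.ext (by omega)
    rwa [← this]
  · intro hj
    have hj' : (j : ℕ) < I.card := by
      have h1 := j.isLt; have h2 := numV_indSub F I; omega
    obtain ⟨x, hxI, hxr⟩ := rnkF_surj I j hj'
    exact ⟨x, mem_psiS F I |>.mpr ⟨hxI, j, hj, hxr.symm⟩, hxr⟩

theorem psiS_inj {M M' : Finset (Fin (numV (indSub F I)))}
    (h : psiS F I M = psiS F I M') : M = M' := by
  rw [← phiS_psiS F I M, ← phiS_psiS F I M', h]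

theorem psiS_union (M M' : Finset (Fin (numV (indSub F I)))) :
    psiS F I (M ∪ M') = psiS F I M ∪ psiS F I M' := by
  ext x
  rw [Finset.mem_union, mem_psiS, mem_psiS, mem_psiS]
  constructor
  · rintro ⟨hxI, j, hj, hjx⟩
    rw [Finset.mem_union] at hj
    rcases hj with hj | hj
    · exact Or.inl ⟨hxI, j, hj, hjx⟩
    · exact Or.inr ⟨hxI, j, hj, hjx⟩
  · rintro (⟨hxI, j, hj, hjx⟩ | ⟨hxI, j, hj, hjx⟩)
    · exact ⟨hxI, j, Finset.mem_union_left _ hj, hjx⟩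
    · exact ⟨hxI, j, Finset.mem_union_right _ hj, hjx⟩

theorem psiS_empty : psiS F I (∅ : Finset (Fin (numV (indSub F I)))) = ∅ := by
  ext x
  rw [mem_psiS]
  simp

theorem psiS_eq_empty_iff (M : Finset (Fin (numV (indSub F I)))) :
    psiS F I M = ∅ ↔ M = ∅ := by
  constructor
  · intro h
    rw [← phiS_psiS F I M, h]
    ext j
    simp [phiS]
  · intro h; rw [h, psiS_empty]

theorem psiS_univ : psiS F I (Finset.univ : Finset (Fin (numV (indSub F I)))) = I := by
  ext x
  rw [mem_psiS]
  constructor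
  · rintro ⟨hxI, _⟩; exact hxI
  · intro hx
    have hr : rnkF I x < numV (indSub F I) := by
      rw [numV_indSub]; exact rnkF_lt I hx
    exact ⟨hx, ⟨rnkF I x, hr⟩, Finset.mem_univ _, rfl⟩

theorem psiS_disjoint_iff (M M' : Finset (Fin (numV (indSub F I)))) :
    Disjoint (psiS F I M) (psiS F I M') ↔ Disjoint M M' := by
  constructor
  · intro h
    rw [Finset.disjoint_left] at h ⊢
    intro j hj hj'
    have hjc : (j : ℕ) < I.card := by
      have h1 := j.isLt; have h2 := numV_indSub F I; omega
    obtain ⟨x, hxI, hxr⟩ := rnkF_surj I j hjc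
    exact h (mem_psiS F I |>.mpr ⟨hxI, j, hj, hxr.symm⟩)
      (mem_psiS F I |>.mpr ⟨hxI, j, hj', hxr.symm⟩)
  · intro h
    rw [Finset.disjoint_left] at h ⊢
    intro x hx hx'
    rw [mem_psiS] at hx hx'
    obtain ⟨hxI, j, hj, hjx⟩ := hx
    obtain ⟨_, j', hj', hj'x⟩ := hx'
    have : j = j' := Fin.ext (by omega)
    exact h hj (this ▸ hj')

end PsiPhi

/-! ### The antipode candidate -/

theorem card_lt_of_ne_univ {n : ℕ} {I : Finset (Fin n)} (h : I ≠ Finset.univ) :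
    I.card < n := by
  have := Finset.card_lt_card (lt_of_le_of_ne (Finset.subset_univ I)
    (by simpa using h))
  simpa using this

open Classical in
/-- recursive antipode candidate -/
noncomputable def Acand (k : Type w) [CommRing k] : RForest X Ω → RAlg k X Ω := fun F =>
  if h : F = 1 then 1
  else - ∑ I ∈ (Finset.univ.filter
      (fun I : Finset (Fin (numV F)) => I ≠ Finset.univ)).attach,
    Acand k (indSub F I.1) * ofF k (indSub F I.1ᶜ)
termination_by F => numV F
decreasing_by
  have hI := I.2
  rw [Finset.mem_filter] at hI
  have := card_lt_of_ne_univ hI.2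
  rw [numV_indSub]
  omega

theorem Acand_one : Acand k (1 : RForest X Ω) = 1 := by
  rw [Acand]
  simp

theorem Acand_eq (F : RForest X Ω) (hF : F ≠ 1) :
    Acand k F = - ∑ I ∈ Finset.univ.filter
        (fun I : Finset (Fin (numV F)) => I ≠ Finset.univ),
      Acand k (indSub F I) * ofF k (indSub F Iᶜ) := by
  rw [Acand]
  rw [dif_neg hF]
  congr 1
  exact Finset.sum_attach _ (fun I => Acand k (indSub F I) * ofF k (indSub F Iᶜ))
/-! ### The antipode equals the candidate -/

theorem toList_ne_nil {F : RForest X Ω} (hF : F ≠ 1) : FreeMonoid.toList F ≠ [] := by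
  intro h
  apply hF
  rw [← FreeMonoid.ofList_toList F, h]
  rfl

theorem S_eq_Acand (S : RAlg k X Ω →ₗ[k] RAlg k X Ω)
    (hS₁ : ∀ x, LinearMap.mul' k (RAlg k X Ω)
      (TensorProduct.map S LinearMap.id (Delta k 0 x)) = eps k x • 1) :
    ∀ F : RForest X Ω, S (ofF k F) = Acand k F := by
  suffices h : ∀ n (F : RForest X Ω), numV F = n → S (ofF k F) = Acand k F from
    fun F => h (numV F) F rfl
  intro n
  induction n using Nat.strong_induction_on with
  | _ n ih =>
  intro F hn
  by_cases hF : F = 1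
  · subst hF
    have h1 := hS₁ (ofF k 1)
    rw [Delta_ofF] at h1
    have hD : DeltaF k 0 (1 : RForest X Ω) = 1 := by
      rw [DeltaF, show FreeMonoid.toList (1 : RForest X Ω) = [] from rfl]
      simp
    rw [hD, eps_ofF, show FreeMonoid.toList (1 : RForest X Ω) = [] from rfl] at h1
    rw [Algebra.TensorProduct.one_def, TensorProduct.map_tmul, LinearMap.mul'_apply] at h1
    simp only [LinearMap.id_coe, id_eq, mul_one, List.isEmpty_nil, if_true, one_smul] at h1
    rw [ofF_one, h1, Acand_one]
  · have h1 := hS₁ (ofF k F)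
    rw [Delta_indSub, map_sum, map_sum] at h1
    simp only [TensorProduct.map_tmul, LinearMap.mul'_apply, LinearMap.id_coe, id_eq] at h1
    rw [eps_ofF] at h1
    rw [if_neg (by simp [List.isEmpty_iff, toList_ne_nil hF]), zero_smul] at h1
    rw [← Finset.add_sum_erase _ _
      (Finset.mem_univ (Finset.univ : Finset (Fin (numV F))))] at h1
    rw [indSub_univ, Finset.compl_univ, indSub_empty, ofF_one, mul_one] at h1
    have hsum : ∀ I ∈ Finset.univ.erase (Finset.univ : Finset (Fin (numV F))),
        S (ofF k (indSub F I)) * ofF k (indSub F Iᶜ)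
          = Acand k (indSub F I) * ofF k (indSub F Iᶜ) := by
      intro I hI
      rw [Finset.mem_erase] at hI
      have hlt : I.card < n := by
        rw [← hn]; exact card_lt_of_ne_univ hI.1
      rw [ih I.card hlt (indSub F I) (numV_indSub F I)]
    rw [Finset.sum_congr rfl hsum] at h1
    rw [eq_neg_of_add_eq_zero_left h1, Acand_eq F hF, Finset.filter_ne']
/-! ### Valid lists of subsets and the antipode formula -/

/-- ordered tuples of pairwise disjoint nonempty subsets with union `J` -/
def validS (F : RForest X Ω) (J : Finset (Fin (numV F))) :
    Set (List (Finset (Fin (numV F)))) :=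
  {L | (∀ I ∈ L, I ≠ ∅) ∧ List.Pairwise (fun I J => Disjoint I J) L ∧
    L.foldr (· ∪ ·) ∅ = J}

theorem subset_foldr {β : Type u'} [DecidableEq β] {L : List (Finset β)} {K : Finset β}
    (hK : K ∈ L) : K ⊆ L.foldr (· ∪ ·) ∅ := by
  induction L with
  | nil => cases hK
  | cons I L ih =>
      rcases List.mem_cons.mp hK with h | h
      · exact h ▸ Finset.subset_union_left
      · exact (ih h).trans Finset.subset_union_right

theorem disjoint_foldr {β : Type u'} [DecidableEq β] {L : List (Finset β)} {K : Finset β}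
    (h : ∀ I ∈ L, Disjoint K I) : Disjoint K (L.foldr (· ∪ ·) ∅) := by
  induction L with
  | nil => simp
  | cons I L ih =>
      rw [List.foldr_cons, Finset.disjoint_union_right]
      exact ⟨h I (List.mem_cons_self), ih (fun J hJ => h J (List.mem_cons_of_mem I hJ))⟩

theorem validS_length_le (F : RForest X Ω) (J : Finset (Fin (numV F)))
    {L : List (Finset (Fin (numV F)))} (hL : L ∈ validS F J) : L.length ≤ J.card := by
  induction L generalizing J with
  | nil => simp
  | cons I L ih =>
      obtain ⟨hne, hpw, hfold⟩ := hL
      rw [List.pairwise_cons] at hpw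
      have hL' : L ∈ validS F (L.foldr (· ∪ ·) ∅) :=
        ⟨fun K hK => hne K (List.mem_cons_of_mem I hK), hpw.2, rfl⟩
      have hdisj : Disjoint I (L.foldr (· ∪ ·) ∅) := disjoint_foldr hpw.1
      have hcard : J.card = I.card + (L.foldr (· ∪ ·) ∅).card := by
        rw [← hfold, List.foldr_cons, Finset.card_union_of_disjoint hdisj]
      have hIpos : 0 < I.card :=
        Finset.card_pos.mpr (Finset.nonempty_iff_ne_empty.mpr (hne I (List.mem_cons_self)))
      have hlen := ih _ hL'
      simp only [List.length_cons]
      omega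

theorem validS_finite (F : RForest X Ω) (J : Finset (Fin (numV F))) :
    (validS F J).Finite := by
  refine Set.Finite.subset (List.finite_length_le (Finset (Fin (numV F))) (numV F))
    (fun L hL => ?_)
  have h1 := validS_length_le F J hL
  have h2 : J.card ≤ numV F := by
    have := Finset.card_le_univ J
    simpa using this
  exact Set.mem_setOf_eq ▸ le_trans h1 h2

/-- the `Finset` of valid tuples -/
noncomputable def validFS (F : RForest X Ω) (J : Finset (Fin (numV F))) :
    Finset (List (Finset (Fin (numV F)))) :=
  (validS_finite F J).toFinset

theorem mem_validFS {F : RForest X Ω} {J : Finset (Fin (numV F))}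
    {L : List (Finset (Fin (numV F)))} :
    L ∈ validFS F J ↔ ((∀ I ∈ L, I ≠ ∅) ∧ List.Pairwise (fun I J => Disjoint I J) L ∧
      L.foldr (· ∪ ·) ∅ = J) :=
  (validS_finite F J).mem_toFinset

theorem validFS_empty (F : RForest X Ω) :
    validFS F (∅ : Finset (Fin (numV F))) = {[]} := by
  ext L
  rw [mem_validFS, Finset.mem_singleton]
  constructor
  · rintro ⟨hne, _, hfold⟩
    cases L with
    | nil => rfl
    | cons I L =>
        exfalso
        apply hne I (List.mem_cons_self)
        have : I ⊆ (I :: L).foldr (· ∪ ·) ∅ := subset_foldr (List.mem_cons_self)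
        rw [hfold] at this
        exact Finset.subset_empty.mp this
  · rintro rfl
    exact ⟨by simp, by simp, rfl⟩

theorem psiS_foldr (F : RForest X Ω) (I : Finset (Fin (numV F)))
    (Ms : List (Finset (Fin (numV (indSub F I))))) :
    psiS F I (Ms.foldr (· ∪ ·) ∅) = (Ms.map (psiS F I)).foldr (· ∪ ·) ∅ := by
  induction Ms with
  | nil => exact psiS_empty F I
  | cons M Ms ih => rw [List.foldr_cons, psiS_union, ih, List.map_cons, List.foldr_cons]

/-- Step (ii): reindexing valid tuples through an induced subforest. -/
theorem sum_valid_indSub (F : RForest X Ω) (I : Finset (Fin (numV F))) :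
    ∑ L ∈ validFS F I, ((-1 : k) ^ L.length) • (L.map fun K => ofF k (indSub F K)).prod
      = ∑ M ∈ validFS (indSub F I) Finset.univ,
        ((-1 : k) ^ M.length) • (M.map fun K => ofF k (indSub (indSub F I) K)).prod := by
  have hmapid : ∀ (L : List (Finset (Fin (numV F)))), (∀ K ∈ L, K ⊆ I) →
      (L.map (phiS F I)).map (psiS F I) = L := by
    intro L hsub
    rw [List.map_map]
    have h : ∀ K ∈ L, (psiS F I ∘ phiS F I) K = id K := fun K hK =>
      psiS_phiS F I (hsub K hK)
    rw [List.map_congr_left h, List.map_id]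
  have hmapid' : ∀ (M : List (Finset (Fin (numV (indSub F I))))),
      (M.map (psiS F I)).map (phiS F I) = M := by
    intro M
    rw [List.map_map]
    have h : ∀ M' ∈ M, (phiS F I ∘ psiS F I) M' = id M' := fun M' _ =>
      phiS_psiS F I M'
    rw [List.map_congr_left h, List.map_id]
  refine Finset.sum_nbij' (fun L => L.map (phiS F I)) (fun M => M.map (psiS F I))
    ?_ ?_ ?_ ?_ ?_
  · intro L hL
    rw [mem_validFS] at hL ⊢
    obtain ⟨hne, hpw, hfold⟩ := hL
    have hsub : ∀ K ∈ L, K ⊆ I := fun K hK => hfold ▸ subset_foldr hK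
    refine ⟨?_, ?_, ?_⟩
    · intro M hM
      rw [List.mem_map] at hM
      obtain ⟨K, hK, rfl⟩ := hM
      intro h
      apply hne K hK
      rw [← psiS_phiS F I (hsub K hK), h, psiS_empty]
    · rw [List.pairwise_map]
      refine List.Pairwise.imp_of_mem (fun {K K'} hK hK' hd => ?_) hpw
      refine (psiS_disjoint_iff F I _ _).mp ?_
      rw [psiS_phiS F I (hsub K hK), psiS_phiS F I (hsub K' hK')]
      exact hd
    · apply psiS_inj F I
      rw [psiS_foldr]
      rw [hmapid L hsub, hfold, psiS_univ]
  · intro M hM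
    rw [mem_validFS] at hM ⊢
    obtain ⟨hne, hpw, hfold⟩ := hM
    refine ⟨?_, ?_, ?_⟩
    · intro K hK
      rw [List.mem_map] at hK
      obtain ⟨M', hM', rfl⟩ := hK
      rw [Ne, psiS_eq_empty_iff]
      exact hne M' hM'
    · rw [List.pairwise_map]
      exact List.Pairwise.imp_of_mem
        (fun {M1 M2} _ _ h => (psiS_disjoint_iff F I M1 M2).mpr h) hpw
    · rw [← psiS_foldr, hfold, psiS_univ]
  · intro L hL
    rw [mem_validFS] at hL
    obtain ⟨hne, hpw, hfold⟩ := hL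
    exact hmapid L (fun K hK => hfold ▸ subset_foldr hK)
  · intro M _
    exact hmapid' M
  · intro L hL
    rw [mem_validFS] at hL
    obtain ⟨hne, hpw, hfold⟩ := hL
    have hsub : ∀ K ∈ L, K ⊆ I := fun K hK => hfold ▸ subset_foldr hK
    rw [List.length_map, List.map_map]
    have h : ∀ K ∈ L, ((fun K' => ofF k (indSub (indSub F I) K')) ∘ phiS F I) K
        = (fun K => ofF k (indSub F K)) K := by
      intro K hK
      show ofF k (indSub (indSub F I) (phiS F I K)) = ofF k (indSub F K)
      rw [indSub_psiS, psiS_phiS F I (hsub K hK)]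
    rw [List.map_congr_left h]
theorem foldr_union_append {β : Type u'} [DecidableEq β] (l₁ l₂ : List (Finset β)) :
    (l₁ ++ l₂).foldr (· ∪ ·) ∅ = l₁.foldr (· ∪ ·) ∅ ∪ l₂.foldr (· ∪ ·) ∅ := by
  induction l₁ with
  | nil => simp
  | cons I l₁ ih => rw [List.cons_append, List.foldr_cons, ih, List.foldr_cons, Finset.union_assoc]

theorem last_decomp (F : RForest X Ω) (hF : F ≠ 1)
    {L : List (Finset (Fin (numV F)))} (hL : L ∈ validFS F Finset.univ) :
    ∃ hne : L ≠ [],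
      (L.dropLast.foldr (· ∪ ·) ∅)ᶜ = L.getLast hne
      ∧ (L.dropLast.foldr (· ∪ ·) ∅) ≠ Finset.univ
      ∧ L.dropLast ∈ validFS F (L.dropLast.foldr (· ∪ ·) ∅) := by
  haveI : Nonempty (Fin (numV F)) := ⟨⟨0, numV_pos F hF⟩⟩
  rw [mem_validFS] at hL
  obtain ⟨hne, hpw, hfold⟩ := hL
  have hLne : L ≠ [] := by
    intro h
    rw [h] at hfold
    exact Finset.univ_nonempty.ne_empty hfold.symm
  refine ⟨hLne, ?_⟩
  set K := L.getLast hLne with hK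
  set L' := L.dropLast with hL'
  have hdec : L' ++ [K] = L := List.dropLast_append_getLast hLne
  have hpw' : List.Pairwise (fun I J => Disjoint I J) (L' ++ [K]) := by rw [hdec]; exact hpw
  rw [List.pairwise_append] at hpw'
  obtain ⟨hpwL', _, hdisj⟩ := hpw'
  have hKJ : Disjoint K (L'.foldr (· ∪ ·) ∅) :=
    disjoint_foldr (fun A hA => (hdisj A hA K (List.mem_singleton.mpr rfl)).symm)
  have hunion : L'.foldr (· ∪ ·) ∅ ∪ K = Finset.univ := by
    rw [← hfold, ← hdec, foldr_union_append]
    simp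
  have hKc : (L'.foldr (· ∪ ·) ∅)ᶜ = K := by
    ext x
    rw [Finset.mem_compl]
    constructor
    · intro hx
      have : x ∈ L'.foldr (· ∪ ·) ∅ ∪ K := hunion ▸ Finset.mem_univ x
      rw [Finset.mem_union] at this
      tauto
    · intro hx
      exact fun hx' => (Finset.disjoint_left.mp hKJ) hx hx'
  have hKne : K ≠ ∅ := hne K (hdec ▸ List.mem_append_right L' (List.mem_singleton.mpr rfl))
  refine ⟨hKc, ?_, ?_⟩
  · intro h
    apply hKne
    rw [← hKc, h, Finset.compl_univ]
  · rw [mem_validFS]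
    exact ⟨fun A hA => hne A (List.dropLast_subset L hA),
      hpw.sublist (List.dropLast_sublist L), rfl⟩

/-- the right-hand side of the antipode formula -/
noncomputable def PhiOf (F : RForest X Ω) : RAlg k X Ω :=
  ∑ L ∈ validFS F Finset.univ,
    ((-1 : k) ^ L.length) • (L.map fun I => ofF k (indSub F I)).prod

theorem Acand_eq_PhiOf : ∀ F : RForest X Ω, F ≠ 1 → Acand k F = (PhiOf F : RAlg k X Ω) := by
  suffices h : ∀ n (F : RForest X Ω), numV F = n → F ≠ 1 → Acand k F = (PhiOf F : RAlg k X Ω)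
    from fun F hF => h (numV F) F rfl hF
  intro n
  induction n using Nat.strong_induction_on with
  | _ n ih =>
  intro F hn hF
  haveI : Nonempty (Fin (numV F)) := ⟨⟨0, numV_pos F hF⟩⟩
  rw [Acand_eq F hF]
  have hstep : ∀ I ∈ Finset.univ.filter
      (fun I : Finset (Fin (numV F)) => I ≠ Finset.univ),
      Acand k (indSub F I) * ofF k (indSub F Iᶜ)
        = ∑ L' ∈ validFS F I, ((-1 : k) ^ L'.length) •
            ((L'.map fun K => ofF k (indSub F K)).prod * ofF k (indSub F Iᶜ)) := by
    intro I hI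
    have hA : Acand k (indSub F I)
        = ∑ L' ∈ validFS F I, ((-1 : k) ^ L'.length) •
            (L'.map fun K => ofF k (indSub F K)).prod := by
      by_cases hIe : I = ∅
      · subst hIe
        rw [indSub_empty, Acand_one, validFS_empty, Finset.sum_singleton]
        simp
      · have hFI : indSub F I ≠ 1 := indSub_ne_one F I hIe
        have hlt : numV (indSub F I) < n := by
          rw [numV_indSub]
          rw [Finset.mem_filter] at hI
          have := card_lt_of_ne_univ hI.2
          omega
        rw [ih (numV (indSub F I)) hlt _ rfl hFI, PhiOf, ← sum_valid_indSub F I]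
    rw [hA, Finset.sum_mul]
    exact Finset.sum_congr rfl (fun L' _ => smul_mul_assoc _ _ _)
  rw [Finset.sum_congr rfl hstep, Finset.sum_sigma', PhiOf, ← Finset.sum_neg_distrib]
  refine Finset.sum_nbij'
    (fun σ => σ.2 ++ [σ.1ᶜ])
    (fun L => ⟨L.dropLast.foldr (· ∪ ·) ∅, L.dropLast⟩)
    ?_ ?_ ?_ ?_ ?_
  · rintro ⟨I, L'⟩ hσ
    rw [Finset.mem_sigma, Finset.mem_filter] at hσ
    obtain ⟨⟨_, hIne⟩, hL'⟩ := hσ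
    rw [mem_validFS] at hL' ⊢
    obtain ⟨hne, hpw, hfold⟩ := hL'
    have hfold' : L'.foldr (· ∪ ·) ∅ = I := hfold
    refine ⟨?_, ?_, ?_⟩
    · intro A hA
      rw [List.mem_append] at hA
      rcases hA with h | h
      · exact hne A h
      · rw [List.mem_singleton] at h
        subst h
        rw [Ne, Finset.compl_eq_empty_iff]
        exact hIne
    · rw [List.pairwise_append]
      refine ⟨hpw, List.pairwise_singleton _ _, fun A hA b hb => ?_⟩
      rw [List.mem_singleton] at hb
      subst hb
      have hAI : A ⊆ I := hfold' ▸ subset_foldr hA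
      exact (disjoint_compl_right).mono_left hAI
    · rw [foldr_union_append, hfold']
      simp
  · intro L hL
    obtain ⟨hne, hKc, hJne, hL'⟩ := last_decomp F hF hL
    rw [Finset.mem_sigma, Finset.mem_filter]
    exact ⟨⟨Finset.mem_univ _, hJne⟩, hL'⟩
  · rintro ⟨I, L'⟩ hσ
    rw [Finset.mem_sigma, Finset.mem_filter] at hσ
    obtain ⟨⟨_, hIne⟩, hL'⟩ := hσ
    rw [mem_validFS] at hL'
    obtain ⟨hne, hpw, hfold⟩ := hL'
    have hfold' : L'.foldr (· ∪ ·) ∅ = I := hfold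
    show (⟨((L' ++ [Iᶜ]).dropLast).foldr (· ∪ ·) ∅, (L' ++ [Iᶜ]).dropLast⟩
      : (_ : Finset (Fin (numV F))) × List (Finset (Fin (numV F)))) = ⟨I, L'⟩
    rw [List.dropLast_concat]
    exact Sigma.ext hfold' HEq.rfl
  · intro L hL
    obtain ⟨hne, hKc, hJne, hL'⟩ := last_decomp F hF hL
    show L.dropLast ++ [(L.dropLast.foldr (· ∪ ·) ∅)ᶜ] = L
    rw [hKc]
    exact List.dropLast_append_getLast hne
  · rintro ⟨I, L'⟩ hσ
    show -(((-1 : k) ^ L'.length) • _) = _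
    rw [List.length_append, List.length_singleton, List.map_append, List.prod_append,
      List.map_singleton, List.prod_singleton, pow_succ, mul_neg_one, neg_smul]
/-- If `S` is the antipode of the connected graded Hopf algebra `(H(X,Ω), m, 1, Δ₀, ε)`,
then for every nonempty forest `F`,
`S(F) = Σ_{I₁ ⊔ ⋯ ⊔ I_k = V(F)} (−1)^k F_{I₁} ⋯ F_{I_k}`, the sum being over all ordered
tuples of pairwise disjoint nonempty subsets of `V(F)` covering `V(F)`. -/
theorem antipode_formula [Nonempty Ω]
    (S : RAlg k X Ω →ₗ[k] RAlg k X Ω)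
    (hS₁ : ∀ x, LinearMap.mul' k (RAlg k X Ω)
        (TensorProduct.map S LinearMap.id (Delta k 0 x)) = eps k x • 1)
    (hS₂ : ∀ x, LinearMap.mul' k (RAlg k X Ω)
        (TensorProduct.map LinearMap.id S (Delta k 0 x)) = eps k x • 1)
    (F : RForest X Ω) (hF : F ≠ 1) :
    S (ofF k F) =
      ∑ᶠ (L : List (Finset (Fin (numV F))))
        (_ : L ≠ [] ∧ (∀ I ∈ L, I ≠ ∅) ∧
          List.Pairwise (fun I J => Disjoint I J) L ∧
          L.foldr (· ∪ ·) ∅ = Finset.univ),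
        ((-1 : k) ^ L.length) • (L.map fun I => ofF k (indSub F I)).prod := by
  haveI : Nonempty (Fin (numV F)) := ⟨⟨0, numV_pos F hF⟩⟩
  have hset : ∀ L : List (Finset (Fin (numV F))),
      (L ≠ [] ∧ (∀ I ∈ L, I ≠ ∅) ∧
        List.Pairwise (fun I J => Disjoint I J) L ∧
        L.foldr (· ∪ ·) ∅ = Finset.univ)
      = (L ∈ ((validFS F Finset.univ : Finset _) :
          Set (List (Finset (Fin (numV F)))))) := by
    intro L
    apply propext
    rw [Finset.mem_coe, mem_validFS]
    constructor
    · rintro ⟨_, h⟩; exact h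
    · intro h
      refine ⟨?_, h⟩
      intro hnil
      rw [hnil] at h
      exact Finset.univ_nonempty.ne_empty h.2.2.symm
  simp only [hset]
  rw [finsum_mem_coe_finset]
  rw [S_eq_Acand S hS₁ F, Acand_eq_PhiOf F hF, PhiOf]

end Moerdijk
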